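/- Let A be a nontrivial unital C*-algebra over ℂ and let u ∈ A be a unitary element. Suppose that for every real number θ there exists a unitary element v ∈ A such that v * u * v⁻¹ = exp(iθ) • u. Then the spectrum of u in ℂ is exactly the unit circle {z ∈ ℂ : |z| = 1}. -/

import Mathlib

open Pointwise

/-- If `u` is a unitary element of a nontrivial unital C*-algebra whose conjugacy class
contains all its scalar rotations `exp(iθ) • u`, then the spectrum of `u` is the full
unit circle. -/
theorem weyl_spectrum_unit_circle
    (A : Type*) [NormedRing A] [StarRing A] [CStarRing A] [NormedAlgebra ℂ A]
    [CompleteSpace A] [Nontrivial A]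
    (u : A) (hu : u ∈ unitary A)
    (h : ∀ θ : ℝ, ∃ v : unitary A,
      (v : A) * u * ((v⁻¹ : unitary A) : A) = Complex.exp (θ * Complex.I) • u) :
    spectrum ℂ u = {z : ℂ | ‖z‖ = 1} := by
  have hne : (spectrum ℂ u).Nonempty := spectrum.nonempty u
  obtain ⟨z₀, hz₀⟩ := hne
  have habs : ∀ z ∈ spectrum ℂ u, ‖z‖ = 1 := fun z hz =>
    by simpa using spectrum.subset_circle_of_unitary hu hz
  have hz₀abs := habs z₀ hz₀
  have hz₀ne : z₀ ≠ 0 := by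
    intro h0; rw [h0] at hz₀abs; simp at hz₀abs
  -- rotation invariance
  have hrot : ∀ θ : ℝ, (Complex.exp (θ * Complex.I)) • spectrum ℂ u = spectrum ℂ u := by
    intro θ
    obtain ⟨v, hv⟩ := h θ
    have := spectrum.units_conjugate (R := ℂ) (a := u) (u := Unitary.toUnits v)
    have hconj : spectrum ℂ (Complex.exp (θ * Complex.I) • u) = spectrum ℂ u := by
      rw [← hv]; exact this
    have hexp : (Complex.exp (θ * Complex.I)) ≠ 0 := Complex.exp_ne_zero _
    calc (Complex.exp (θ * Complex.I)) • spectrum ℂ u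
        = (Units.mk0 _ hexp : ℂˣ) • spectrum ℂ u := rfl
      _ = spectrum ℂ ((Units.mk0 _ hexp : ℂˣ) • u) :=
          (spectrum.unit_smul_eq_smul u _).symm
      _ = spectrum ℂ (Complex.exp (θ * Complex.I) • u) := rfl
      _ = spectrum ℂ u := hconj
  ext z
  simp only [Set.mem_setOf_eq]
  constructor
  · exact habs z
  · intro hz
    set θ := (z / z₀).arg with hθ
    have habsd : ‖z / z₀‖ = 1 := by
      rw [norm_div, hz, hz₀abs]; norm_num
    have key : z = Complex.exp (θ * Complex.I) * z₀ := by
      have := Complex.norm_mul_exp_arg_mul_I (z / z₀)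
      rw [habsd] at this
      have h1 : Complex.exp (θ * Complex.I) = z / z₀ := by simpa using this
      rw [h1, div_mul_cancel₀ _ hz₀ne]
    rw [← hrot θ]
    exact ⟨z₀, hz₀, by rw [key]; simp [Algebra.smul_def]⟩
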